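/- Fix Θ ∈ (0, π). Let (r₁, r₂) and (r̃₁, r̃₂) be pairs of positive numbers with tanh(r₂/2)/tanh(r̃₂/2) ≤ tanh(r₁/2)/tanh(r̃₁/2) and tanh(r₁/2)/tanh(r̃₁/2) > 1. Then ϑ₁(r₁, r₂) < ϑ₁(r̃₁, r̃₂). -/

import Mathlib

open Real

/-- The inverse hyperbolic cosine: `arcosh x = log (x + √(x² − 1))` for `x ≥ 1`. -/
noncomputable def arcosh (x : ℝ) : ℝ := Real.log (x + Real.sqrt (x ^ 2 - 1))

/-- The hyperbolic distance between the centers of two hyperbolic disks of radii `r₁`, `r₂`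
meeting at exterior intersection angle `Θ` (hyperbolic cosine law). -/
noncomputable def dist2 (Θ r₁ r₂ : ℝ) : ℝ :=
  _root_.arcosh (Real.cosh r₁ * Real.cosh r₂ + Real.cos Θ * Real.sinh r₁ * Real.sinh r₂)

/-- The inner angle `ϑ₁` at the first center of the hyperbolic triangle with side
lengths `r₁`, `r₂`, `d` (hyperbolic law of cosines). -/
noncomputable def theta2₁ (Θ r₁ r₂ : ℝ) : ℝ :=
  Real.arccos ((Real.cosh r₁ * Real.cosh (dist2 Θ r₁ r₂) - Real.cosh r₂) /
    (Real.sinh r₁ * Real.sinh (dist2 Θ r₁ r₂)))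

/-- The inner angle `ϑ₂` at the second center of the hyperbolic triangle with side
lengths `r₁`, `r₂`, `d` (hyperbolic law of cosines). -/
noncomputable def theta2₂ (Θ r₁ r₂ : ℝ) : ℝ :=
  Real.arccos ((Real.cosh r₂ * Real.cosh (dist2 Θ r₁ r₂) - Real.cosh r₁) /
    (Real.sinh r₂ * Real.sinh (dist2 Θ r₁ r₂)))

lemma cosh_arcosh {x : ℝ} (hx : 1 ≤ x) : Real.cosh (_root_.arcosh x) = x := by
  have h0 : 0 ≤ x ^ 2 - 1 := by nlinarith
  have hs : Real.sqrt (x ^ 2 - 1) ^ 2 = x ^ 2 - 1 := Real.sq_sqrt h0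
  have hsnn : 0 ≤ Real.sqrt (x ^ 2 - 1) := Real.sqrt_nonneg _
  have hy : 0 < x + Real.sqrt (x ^ 2 - 1) := by linarith
  rw [_root_.arcosh, Real.cosh_log hy]
  have hinv : (x + Real.sqrt (x ^ 2 - 1))⁻¹ = x - Real.sqrt (x ^ 2 - 1) := by
    exact inv_eq_of_mul_eq_one_right (by nlinarith)
  rw [hinv]; ring

lemma sinh_arcosh {x : ℝ} (hx : 1 ≤ x) : Real.sinh (_root_.arcosh x) = Real.sqrt (x ^ 2 - 1) := by
  have h0 : 0 ≤ x ^ 2 - 1 := by nlinarith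
  have hs : Real.sqrt (x ^ 2 - 1) ^ 2 = x ^ 2 - 1 := Real.sq_sqrt h0
  have hsnn : 0 ≤ Real.sqrt (x ^ 2 - 1) := Real.sqrt_nonneg _
  have hy : 0 < x + Real.sqrt (x ^ 2 - 1) := by linarith
  rw [_root_.arcosh, Real.sinh_log hy]
  have hinv : (x + Real.sqrt (x ^ 2 - 1))⁻¹ = x - Real.sqrt (x ^ 2 - 1) := by
    exact inv_eq_of_mul_eq_one_right (by nlinarith)
  rw [hinv]; ring

lemma inv_add_mono {x y : ℝ} (hx : 0 < x) (hxy : x ≤ y) (hy1 : y ≤ 1) :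
    1 / y + y ≤ 1 / x + x := by
  have hy : 0 < y := hx.trans_le hxy
  rw [div_add' _ _ _ hy.ne', div_add' _ _ _ hx.ne', div_le_div_iff₀ hy hx]
  nlinarith [mul_pos hx hy, mul_nonneg (sub_nonneg.2 hxy) (sub_nonneg.2 hy1)]

set_option maxHeartbeats 1000000 in
lemma keyIneq (a b t₁ t₂ c : ℝ) (ha : 0 < a) (hb : 0 < b) (hb1 : b < 1)
    (ht1 : t₁ < 1) (ht2 : 0 < t₂) (ht21 : t₂ < 1) (hat : a < t₁)
    (hcon : a * t₂ ≤ b * t₁) (hc : -1 < c) :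
    (a / b + a * b + c * (1 + a ^ 2)) / (1 - a ^ 2)
      < (t₁ / t₂ + t₁ * t₂ + c * (1 + t₁ ^ 2)) / (1 - t₁ ^ 2) := by
  have ht : 0 < t₁ := ha.trans hat
  have ha1 : a < 1 := hat.trans ht1
  have hden1 : (0:ℝ) < 1 - a ^ 2 := by nlinarith
  have hden2 : (0:ℝ) < 1 - t₁ ^ 2 := by nlinarith
  rcases le_or_gt (t₁ * b) a with hcase | hcase
  · -- Case 1 : t₁ * b ≤ a
    set s : ℝ := t₁ * b / a with hs_def
    have hs : 0 < s := by positivity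
    have hs1 : s ≤ 1 := by rw [div_le_one ha]; exact hcase
    have hle : t₂ ≤ s := by rw [le_div_iff₀ ha]; linarith [hcon]
    have hmono := inv_add_mono ht2 hle hs1
    have hstep1 : a / b + t₁ ^ 2 * (b / a) + c * (1 + t₁ ^ 2)
        ≤ t₁ / t₂ + t₁ * t₂ + c * (1 + t₁ ^ 2) := by
      have h1 : t₁ * (1 / s + s) ≤ t₁ * (1 / t₂ + t₂) := by
        exact mul_le_mul_of_nonneg_left hmono ht.le
      have h2 : t₁ * (1 / s + s) = a / b + t₁ ^ 2 * (b / a) := by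
        rw [hs_def]; field_simp
      have h3 : t₁ * (1 / t₂ + t₂) = t₁ / t₂ + t₁ * t₂ := by
        field_simp
      nlinarith [h1]
    have hstep2 : (a / b + a * b + c * (1 + a ^ 2)) / (1 - a ^ 2)
        < (a / b + t₁ ^ 2 * (b / a) + c * (1 + t₁ ^ 2)) / (1 - t₁ ^ 2) := by
      rw [div_lt_div_iff₀ hden1 hden2, ← sub_pos]
      have hexp : (a / b + t₁ ^ 2 * (b / a) + c * (1 + t₁ ^ 2)) * (1 - a ^ 2)
          - (a / b + a * b + c * (1 + a ^ 2)) * (1 - t₁ ^ 2)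
          = ((t₁ ^ 2 - a ^ 2) * (a ^ 2 + b ^ 2 + 2 * a * b * c)) / (a * b) := by
        field_simp; ring
      rw [hexp]
      apply div_pos _ (by positivity)
      have h4 : 0 < a ^ 2 + b ^ 2 + 2 * a * b * c := by
        nlinarith [sq_nonneg (a - b), mul_pos ha hb]
      have h5 : 0 < t₁ ^ 2 - a ^ 2 := by nlinarith
      exact mul_pos h5 h4
    calc (a / b + a * b + c * (1 + a ^ 2)) / (1 - a ^ 2)
        < (a / b + t₁ ^ 2 * (b / a) + c * (1 + t₁ ^ 2)) / (1 - t₁ ^ 2) := hstep2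
      _ ≤ (t₁ / t₂ + t₁ * t₂ + c * (1 + t₁ ^ 2)) / (1 - t₁ ^ 2) := by gcongr
  · -- Case 2 : a < t₁ * b
    have hstep1 : 2 * t₁ + c * (1 + t₁ ^ 2) < t₁ / t₂ + t₁ * t₂ + c * (1 + t₁ ^ 2) := by
      have h1 : 2 < 1 / t₂ + t₂ := by
        rw [div_add' _ _ _ ht2.ne', lt_div_iff₀ ht2]
        nlinarith [sq_nonneg (1 - t₂)]
      have h3 : t₁ * (1 / t₂ + t₂) = t₁ / t₂ + t₁ * t₂ := by field_simp
      nlinarith [mul_lt_mul_of_pos_left h1 ht]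
    have hstep2 : a / b + a * b + c * (1 + a ^ 2) ≤ t₁ + a ^ 2 / t₁ + c * (1 + a ^ 2) := by
      have hx : 0 < a / t₁ := by positivity
      have hxy : a / t₁ ≤ b := by
        rw [div_le_iff₀ ht]
        calc a ≤ t₁ * b := hcase.le
          _ = b * t₁ := mul_comm _ _
      have hmono := inv_add_mono hx hxy hb1.le
      have h1 : a * (1 / b + b) ≤ a * (1 / (a / t₁) + a / t₁) :=
        mul_le_mul_of_nonneg_left hmono ha.le
      have h2 : a * (1 / (a / t₁) + a / t₁) = t₁ + a ^ 2 / t₁ := by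
        rw [one_div_div]
        field_simp
      have h3 : a * (1 / b + b) = a / b + a * b := by field_simp
      nlinarith [h1]
    have hstep3 : (t₁ + a ^ 2 / t₁ + c * (1 + a ^ 2)) / (1 - a ^ 2)
        ≤ (2 * t₁ + c * (1 + t₁ ^ 2)) / (1 - t₁ ^ 2) := by
      rw [div_le_div_iff₀ hden1 hden2, ← sub_nonneg]
      have hexp : (2 * t₁ + c * (1 + t₁ ^ 2)) * (1 - a ^ 2)
          - (t₁ + a ^ 2 / t₁ + c * (1 + a ^ 2)) * (1 - t₁ ^ 2)
          = ((t₁ ^ 2 - a ^ 2) * (1 + t₁ ^ 2 + 2 * t₁ * c)) / t₁ := by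
        field_simp; ring
      rw [hexp]
      apply div_nonneg _ ht.le
      have h4 : 0 < 1 + t₁ ^ 2 + 2 * t₁ * c := by nlinarith [sq_nonneg (1 - t₁)]
      have h5 : 0 ≤ t₁ ^ 2 - a ^ 2 := by nlinarith
      exact mul_nonneg h5 h4.le
    calc (a / b + a * b + c * (1 + a ^ 2)) / (1 - a ^ 2)
        ≤ (t₁ + a ^ 2 / t₁ + c * (1 + a ^ 2)) / (1 - a ^ 2) := by gcongr
      _ ≤ (2 * t₁ + c * (1 + t₁ ^ 2)) / (1 - t₁ ^ 2) := hstep3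
      _ < (t₁ / t₂ + t₁ * t₂ + c * (1 + t₁ ^ 2)) / (1 - t₁ ^ 2) := by gcongr

lemma tanh_pos' {x : ℝ} (hx : 0 < x) : 0 < Real.tanh x := by
  rw [Real.tanh_eq_sinh_div_cosh]
  exact div_pos (Real.sinh_pos_iff.2 hx) (Real.cosh_pos x)

lemma tanh_lt_one' (x : ℝ) : Real.tanh x < 1 := by
  rw [Real.tanh_eq_sinh_div_cosh, div_lt_one (Real.cosh_pos x)]
  exact Real.sinh_lt_cosh x

lemma cosh_half (r : ℝ) :
    Real.cosh r = (1 + Real.tanh (r / 2) ^ 2) / (1 - Real.tanh (r / 2) ^ 2) := by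
  have hc := Real.cosh_pos (r / 2)
  have hid := Real.cosh_sq_sub_sinh_sq (r / 2)
  have ht1 : Real.tanh (r / 2) < 1 := tanh_lt_one' _
  have ht2 : -1 < Real.tanh (r / 2) := by
    have := tanh_lt_one' (-(r / 2)); rw [Real.tanh_neg] at this; linarith
  have hne : 1 - Real.tanh (r / 2) ^ 2 ≠ 0 := by nlinarith
  have hr : r = 2 * (r / 2) := by ring
  rw [hr, Real.cosh_two_mul, Real.tanh_eq_sinh_div_cosh] at *
  rw [div_pow] at *
  field_simp at *
  exact hid

lemma sinh_half (r : ℝ) :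
    Real.sinh r = 2 * Real.tanh (r / 2) / (1 - Real.tanh (r / 2) ^ 2) := by
  have hc := Real.cosh_pos (r / 2)
  have hid := Real.cosh_sq_sub_sinh_sq (r / 2)
  have ht1 : Real.tanh (r / 2) < 1 := tanh_lt_one' _
  have ht2 : -1 < Real.tanh (r / 2) := by
    have := tanh_lt_one' (-(r / 2)); rw [Real.tanh_neg] at this; linarith
  have hne : 1 - Real.tanh (r / 2) ^ 2 ≠ 0 := by nlinarith
  have hr : r = 2 * (r / 2) := by ring
  rw [hr, Real.sinh_two_mul, Real.tanh_eq_sinh_div_cosh] at *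
  rw [div_pow] at *
  field_simp at *
  nlinarith [hid, Real.sinh_sq (r/2)]

lemma Gval (c r ρ : ℝ) (hr : 0 < r) (hρ : 0 < ρ) :
    Real.sinh r * Real.cosh ρ / Real.sinh ρ + c * Real.cosh r
      = (Real.tanh (r / 2) / Real.tanh (ρ / 2) + Real.tanh (r / 2) * Real.tanh (ρ / 2)
          + c * (1 + Real.tanh (r / 2) ^ 2)) / (1 - Real.tanh (r / 2) ^ 2) := by
  have htr : 0 < Real.tanh (r / 2) := tanh_pos' (by linarith)
  have htρ : 0 < Real.tanh (ρ / 2) := tanh_pos' (by linarith)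
  have htr1 : Real.tanh (r / 2) < 1 := tanh_lt_one' _
  have htρ1 : Real.tanh (ρ / 2) < 1 := tanh_lt_one' _
  have h1 : (1:ℝ) - Real.tanh (r / 2) ^ 2 ≠ 0 := by nlinarith
  have h2 : (1:ℝ) - Real.tanh (ρ / 2) ^ 2 ≠ 0 := by nlinarith
  rw [cosh_half r, cosh_half ρ, sinh_half r, sinh_half ρ]
  field_simp

lemma ratio_mono {s x y : ℝ} (hs : 0 < s) (h : x < y) :
    x / Real.sqrt (s ^ 2 + x ^ 2) < y / Real.sqrt (s ^ 2 + y ^ 2) := by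
  have hA : 0 < Real.sqrt (s ^ 2 + x ^ 2) := Real.sqrt_pos.2 (by positivity)
  have hB : 0 < Real.sqrt (s ^ 2 + y ^ 2) := Real.sqrt_pos.2 (by positivity)
  have hA2 : Real.sqrt (s ^ 2 + x ^ 2) ^ 2 = s ^ 2 + x ^ 2 := Real.sq_sqrt (by positivity)
  have hB2 : Real.sqrt (s ^ 2 + y ^ 2) ^ 2 = s ^ 2 + y ^ 2 := Real.sq_sqrt (by positivity)
  rw [div_lt_div_iff₀ hA hB]
  rcases le_or_gt 0 x with hx | hx
  · have hy : 0 < y := lt_of_le_of_lt hx h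
    have hsq : (x * Real.sqrt (s ^ 2 + y ^ 2)) ^ 2 < (y * Real.sqrt (s ^ 2 + x ^ 2)) ^ 2 := by
      rw [mul_pow, mul_pow, hA2, hB2]
      nlinarith [mul_pos (mul_pos hs hs) (mul_pos (sub_pos.2 h) (by linarith : (0:ℝ) < y + x))]
    exact lt_of_pow_lt_pow_left₀ 2 (by positivity) hsq
  · rcases le_or_gt 0 y with hy | hy
    · have hL : x * Real.sqrt (s ^ 2 + y ^ 2) < 0 := mul_neg_of_neg_of_pos hx hB
      have hR : 0 ≤ y * Real.sqrt (s ^ 2 + x ^ 2) := mul_nonneg hy hA.le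
      linarith
    · have hsq : (-y * Real.sqrt (s ^ 2 + x ^ 2)) ^ 2 < (-x * Real.sqrt (s ^ 2 + y ^ 2)) ^ 2 := by
        rw [mul_pow, mul_pow, hA2, hB2]
        nlinarith [mul_pos (mul_pos hs hs) (mul_pos_of_neg_of_neg (by linarith : x - y < 0) (by linarith : x + y < 0))]
      have := lt_of_pow_lt_pow_left₀ 2 (mul_nonneg (by linarith : (0:ℝ) ≤ -x) hB.le) hsq
      linarith

lemma ratio_mem (s x : ℝ) (hs : 0 < s) :
    x / Real.sqrt (s ^ 2 + x ^ 2) ∈ Set.Icc (-1 : ℝ) 1 := by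
  have hpos : 0 < Real.sqrt (s ^ 2 + x ^ 2) := Real.sqrt_pos.2 (by positivity)
  have habs : |x| ≤ Real.sqrt (s ^ 2 + x ^ 2) := by
    rw [← Real.sqrt_sq_eq_abs]
    exact Real.sqrt_le_sqrt (by nlinarith)
  rw [Set.mem_Icc, ← abs_le, abs_div, abs_of_pos hpos]
  exact div_le_one_of_le₀ habs hpos.le

lemma theta_repr (Θ r₁ r₂ : ℝ) (hΘ : Θ ∈ Set.Ioo 0 π) (h1 : 0 < r₁) (h2 : 0 < r₂) :
    theta2₁ Θ r₁ r₂ = Real.arccos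
      ((Real.sinh r₁ * Real.cosh r₂ / Real.sinh r₂ + Real.cos Θ * Real.cosh r₁) /
        Real.sqrt (Real.sin Θ ^ 2 +
          (Real.sinh r₁ * Real.cosh r₂ / Real.sinh r₂ + Real.cos Θ * Real.cosh r₁) ^ 2)) := by
  obtain ⟨hΘ0, hΘπ⟩ := hΘ
  have hs1 : 0 < Real.sinh r₁ := Real.sinh_pos_iff.2 h1
  have hs2 : 0 < Real.sinh r₂ := Real.sinh_pos_iff.2 h2
  have hc1 : 0 < Real.cosh r₁ := Real.cosh_pos r₁
  have hc2 : 0 < Real.cosh r₂ := Real.cosh_pos r₂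
  have hsin : 0 < Real.sin Θ := Real.sin_pos_of_pos_of_lt_pi hΘ0 hΘπ
  have hcos : -1 < Real.cos Θ := by
    have := Real.cos_lt_cos_of_nonneg_of_le_pi hΘ0.le le_rfl hΘπ
    rw [Real.cos_pi] at this; linarith
  set g : ℝ := Real.sinh r₁ * Real.cosh r₂ / Real.sinh r₂ + Real.cos Θ * Real.cosh r₁ with hg
  set X : ℝ := Real.cosh r₁ * Real.cosh r₂ + Real.cos Θ * Real.sinh r₁ * Real.sinh r₂ with hX
  have hX1 : 1 < X := by
    have hsub := Real.cosh_sub r₁ r₂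
    have hone := Real.one_le_cosh (r₁ - r₂)
    nlinarith [mul_pos hs1 hs2]
  have e1 : Real.sinh r₂ * g
      = Real.sinh r₁ * Real.cosh r₂ + Real.cos Θ * Real.cosh r₁ * Real.sinh r₂ := by
    rw [hg]; field_simp
  have hsq : X ^ 2 - 1 = Real.sinh r₂ ^ 2 * (Real.sin Θ ^ 2 + g ^ 2) := by
    have h3 : Real.sin Θ ^ 2 = 1 - Real.cos Θ ^ 2 := by
      nlinarith [Real.sin_sq_add_cos_sq Θ]
    have expand : Real.sinh r₂ ^ 2 * (Real.sin Θ ^ 2 + g ^ 2)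
        = Real.sinh r₂ ^ 2 * Real.sin Θ ^ 2 + (Real.sinh r₂ * g) ^ 2 := by ring
    rw [expand, e1, h3, hX]
    linear_combination (Real.cosh r₂ ^ 2 - Real.cos Θ ^ 2 * Real.sinh r₂ ^ 2) *
        Real.cosh_sq_sub_sinh_sq r₁ + Real.cosh_sq_sub_sinh_sq r₂
  have hgpos : 0 < Real.sin Θ ^ 2 + g ^ 2 := by positivity
  have hsqrt : Real.sqrt (X ^ 2 - 1) = Real.sinh r₂ * Real.sqrt (Real.sin Θ ^ 2 + g ^ 2) := by
    rw [hsq, Real.sqrt_mul (by positivity), Real.sqrt_sq hs2.le]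
  have hnum : Real.cosh r₁ * X - Real.cosh r₂ = Real.sinh r₁ * (Real.sinh r₂ * g) := by
    rw [e1, hX]
    linear_combination Real.cosh r₂ * Real.cosh_sq_sub_sinh_sq r₁
  have hd : dist2 Θ r₁ r₂ = _root_.arcosh X := rfl
  rw [theta2₁, hd, _root_.cosh_arcosh hX1.le, _root_.sinh_arcosh hX1.le, hsqrt, hnum]
  congr 1
  rw [div_eq_div_iff (by positivity) (ne_of_gt (Real.sqrt_pos.2 hgpos))]
  ring

theorem two_circle_maximum_principle
    (Θ : ℝ) (hΘ : Θ ∈ Set.Ioo 0 Real.pi)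
    (r₁ r₂ r₁' r₂' : ℝ) (hr₁ : 0 < r₁) (hr₂ : 0 < r₂) (hr₁' : 0 < r₁') (hr₂' : 0 < r₂')
    (hmax : Real.tanh (r₂ / 2) / Real.tanh (r₂' / 2) ≤ Real.tanh (r₁ / 2) / Real.tanh (r₁' / 2))
    (hgt : 1 < Real.tanh (r₁ / 2) / Real.tanh (r₁' / 2)) :
    theta2₁ Θ r₁ r₂ < theta2₁ Θ r₁' r₂' := by
  have hsin : 0 < Real.sin Θ := Real.sin_pos_of_pos_of_lt_pi hΘ.1 hΘ.2
  have hcos : -1 < Real.cos Θ := by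
    have := Real.cos_lt_cos_of_nonneg_of_le_pi hΘ.1.le le_rfl hΘ.2
    rw [Real.cos_pi] at this; linarith
  have ha : 0 < Real.tanh (r₁' / 2) := tanh_pos' (by linarith)
  have hb : 0 < Real.tanh (r₂' / 2) := tanh_pos' (by linarith)
  have ht2 : 0 < Real.tanh (r₂ / 2) := tanh_pos' (by linarith)
  have hb1 : Real.tanh (r₂' / 2) < 1 := tanh_lt_one' _
  have ht1 : Real.tanh (r₁ / 2) < 1 := tanh_lt_one' _
  have ht21 : Real.tanh (r₂ / 2) < 1 := tanh_lt_one' _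
  have hat : Real.tanh (r₁' / 2) < Real.tanh (r₁ / 2) := by
    rw [lt_div_iff₀ ha, one_mul] at hgt; exact hgt
  have hcon : Real.tanh (r₁' / 2) * Real.tanh (r₂ / 2)
      ≤ Real.tanh (r₂' / 2) * Real.tanh (r₁ / 2) := by
    rw [div_le_div_iff₀ hb ha] at hmax
    calc Real.tanh (r₁' / 2) * Real.tanh (r₂ / 2)
        = Real.tanh (r₂ / 2) * Real.tanh (r₁' / 2) := mul_comm _ _
      _ ≤ Real.tanh (r₁ / 2) * Real.tanh (r₂' / 2) := hmax
      _ = Real.tanh (r₂' / 2) * Real.tanh (r₁ / 2) := mul_comm _ _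
  have key := keyIneq (Real.tanh (r₁' / 2)) (Real.tanh (r₂' / 2)) (Real.tanh (r₁ / 2))
    (Real.tanh (r₂ / 2)) (Real.cos Θ) ha hb hb1 ht1 ht2 ht21 hat hcon hcos
  have hG : Real.sinh r₁' * Real.cosh r₂' / Real.sinh r₂' + Real.cos Θ * Real.cosh r₁'
      < Real.sinh r₁ * Real.cosh r₂ / Real.sinh r₂ + Real.cos Θ * Real.cosh r₁ := by
    rw [Gval _ _ _ hr₁' hr₂', Gval _ _ _ hr₁ hr₂]
    exact key
  rw [theta_repr Θ r₁ r₂ hΘ hr₁ hr₂, theta_repr Θ r₁' r₂' hΘ hr₁' hr₂']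
  exact Real.strictAntiOn_arccos (ratio_mem _ _ hsin) (ratio_mem _ _ hsin) (ratio_mono hsin hG)
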